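/- A continuous surjection f: X → X of a compact metric space is bi-asymptotically c-expansive if and only if f^k is bi-asymptotically c-expansive for some k ∈ ℕ⁺, if and only if f^k is bi-asymptotically c-expansive for every k ∈ ℕ⁺. -/
import Mathlib


open Filter Topology Function

/-- A full orbit (element of the inverse limit) of `f`. -/
def FullOrbit {X : Type*} (f : X → X) (x : ℤ → X) : Prop := ∀ n : ℤ, f (x n) = x (n + 1)

/-- `f` is bi-asymptotically `c`-expansive with constant `c`. -/
def BiAsympCExpWith {X : Type*} [MetricSpace X] (f : X → X) (c : ℝ) : Prop :=
  (∀ x y : ℤ → X, FullOrbit f x → FullOrbit f y →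
      (∀ n : ℕ, dist (x n) (y n) ≤ c) →
      Tendsto (fun n : ℕ => dist (x n) (y n)) atTop (𝓝 0)) ∧
  (∀ x y : ℤ → X, FullOrbit f x → FullOrbit f y →
      (∀ n : ℕ, dist (x (-(n : ℤ))) (y (-(n : ℤ))) ≤ c) →
      Tendsto (fun n : ℕ => dist (x (-(n : ℤ))) (y (-(n : ℤ)))) atTop (𝓝 0))

/-- `f` is bi-asymptotically `c`-expansive (for some constant). -/
def BiAsympCExpansive {X : Type*} [MetricSpace X] (f : X → X) : Prop :=
  ∃ c > 0, BiAsympCExpWith f c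

/-- `f` has the shadowing property. -/
def Shadowing {X : Type*} [MetricSpace X] (f : X → X) : Prop :=
  ∀ ε > 0, ∃ δ > 0, ∀ x : ℕ → X, (∀ n : ℕ, dist (f (x n)) (x (n + 1)) ≤ δ) →
    ∃ y : X, ∀ n : ℕ, dist (f^[n] y) (x n) ≤ ε

/-- `x` is a non-wandering point of `f`. -/
def NonWandering {X : Type*} [TopologicalSpace X] (f : X → X) (x : X) : Prop :=
  ∀ U : Set X, IsOpen U → x ∈ U → ∃ n : ℕ, 0 < n ∧ (f^[n] '' U ∩ U).Nonempty

/-- There is a finite `α`-chain from `x` to `y`. -/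
def ChainRel {X : Type*} [MetricSpace X] (f : X → X) (α : ℝ) (x y : X) : Prop :=
  ∃ (n : ℕ) (z : ℕ → X), 0 < n ∧ z 0 = x ∧ z n = y ∧
    ∀ i < n, dist (f (z i)) (z (i + 1)) ≤ α

/-- `x` is a chain recurrent point of `f`. -/
def ChainRecurrent {X : Type*} [MetricSpace X] (f : X → X) (x : X) : Prop :=
  ∀ α > 0, ChainRel f α x x

/-- chain equivalence of chain recurrent points -/
def ChainEquiv {X : Type*} [MetricSpace X] (f : X → X) (x y : X) : Prop :=
  ∀ α > 0, ChainRel f α x y ∧ ChainRel f α y x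

/-- basic sets: chain equivalence classes of `CR(f)` -/
def IsBasicSet {X : Type*} [MetricSpace X] (f : X → X) (B : Set X) : Prop :=
  ∃ x : X, ChainRecurrent f x ∧ B = {y | ChainRecurrent f y ∧ ChainEquiv f x y}

/-- the stable set of `x`. -/
def Ws {X : Type*} [MetricSpace X] (f : X → X) (x : X) : Set X :=
  {y | Tendsto (fun n : ℕ => dist (f^[n] x) (f^[n] y)) atTop (𝓝 0)}

/-- the unstable set of a full orbit `x`. -/
def Wu {X : Type*} [MetricSpace X] (f : X → X) (x : ℤ → X) : Set X :=
  {y₀ | ∃ y : ℤ → X, FullOrbit f y ∧ y 0 = y₀ ∧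
    Tendsto (fun n : ℕ => dist (x (-(n : ℤ))) (y (-(n : ℤ)))) atTop (𝓝 0)}

/-- `g` restricted to `A` is topologically transitive. -/
def TopTransOn {X : Type*} [TopologicalSpace X] (g : X → X) (A : Set X) : Prop :=
  ∀ U V : Set X, IsOpen U → IsOpen V → (U ∩ A).Nonempty → (V ∩ A).Nonempty →
    ∃ n : ℕ, 0 < n ∧ (g^[n] '' (U ∩ A) ∩ (V ∩ A)).Nonempty

/-- `g` restricted to `A` is topologically mixing. -/
def TopMixingOn {X : Type*} [TopologicalSpace X] (g : X → X) (A : Set X) : Prop :=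
  ∀ U V : Set X, IsOpen U → IsOpen V → (U ∩ A).Nonempty → (V ∩ A).Nonempty →
    ∃ N : ℕ, ∀ n ≥ N, (g^[n] '' (U ∩ A) ∩ (V ∩ A)).Nonempty

/-- `g` is asymptotically expansive with constant `c`. -/
def AsympExpWith {X : Type*} [MetricSpace X] (g : X → X) (c : ℝ) : Prop :=
  ∀ x y : X, (∀ n : ℕ, dist (g^[n] x) (g^[n] y) ≤ c) →
    Tendsto (fun n : ℕ => dist (g^[n] x) (g^[n] y)) atTop (𝓝 0)

/-- `f` is bi-asymptotically `c`-expansive iff some positive iterate is, iff every positive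
iterate is. -/
-- helper lemmas

lemma my_orbit_iterate {X : Type*} {f : X → X} {x : ℤ → X} (hx : FullOrbit f x) :
    ∀ (j : ℕ) (m : ℤ), f^[j] (x m) = x (m + j) := by
  intro j
  induction j with
  | zero => simp
  | succ j ih =>
    intro m
    rw [Function.iterate_succ_apply', ih, hx]
    push_cast; ring_nf

lemma my_unif {X : Type*} [MetricSpace X] [CompactSpace X] (f : X → X) (hf : Continuous f)
    {c : ℝ} (hc : 0 < c) : ∀ k : ℕ, ∃ δ > 0, δ ≤ c ∧
      ∀ a b : X, dist a b ≤ δ → ∀ j < k, dist (f^[j] a) (f^[j] b) ≤ c := by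
  intro k
  induction k with
  | zero => exact ⟨c, hc, le_refl c, fun a b _ j hj => absurd hj (by omega)⟩
  | succ k ih =>
    obtain ⟨δ, hδ, hδc, H⟩ := ih
    have hcont : UniformContinuous f^[k] :=
      CompactSpace.uniformContinuous_of_continuous (hf.iterate k)
    obtain ⟨δ', hδ', H'⟩ := Metric.uniformContinuous_iff.mp hcont c hc
    refine ⟨min δ (δ'/2), lt_min hδ (by linarith), (min_le_left _ _).trans hδc, ?_⟩
    intro a b hab j hj
    rcases Nat.lt_succ_iff_lt_or_eq.mp hj with hj | rfl
    · exact H a b (hab.trans (min_le_left _ _)) j hj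
    · exact le_of_lt (H' (lt_of_le_of_lt (hab.trans (min_le_right _ _)) (by linarith)))

lemma my_interp {X : Type*} {f : X → X} {k : ℕ} (hk : 0 < k) {x : ℤ → X}
    (hx : FullOrbit f^[k] x) : ∃ z : ℤ → X, FullOrbit f z ∧
      ∀ (q : ℤ) (j : ℕ), j < k → z ((k : ℤ) * q + j) = f^[j] (x q) := by
  have hk' : (k : ℤ) ≠ 0 := by exact_mod_cast hk.ne'
  refine ⟨fun m => f^[((m % (k : ℤ))).toNat] (x (m / (k : ℤ))), ?_, ?_⟩
  · -- FullOrbit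
    intro m
    have heval : ∀ (q : ℤ) (j : ℕ), j < k →
        (fun m => f^[((m % (k : ℤ))).toNat] (x (m / (k : ℤ)))) ((k : ℤ) * q + j)
          = f^[j] (x q) := by
      intro q j hj
      have h1 : ((k : ℤ) * q + j) / k = q := by
        rw [add_comm, Int.add_mul_ediv_left _ _ hk',
          Int.ediv_eq_zero_of_lt (by positivity) (by exact_mod_cast hj), zero_add]
      have h2 : ((k : ℤ) * q + j) % k = j := by
        rw [add_comm, Int.add_mul_emod_self_left,
          Int.emod_eq_of_lt (by positivity) (by exact_mod_cast hj)]
      simp only [h1, h2, Int.toNat_natCast]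
    have hj0 : 0 ≤ m % (k : ℤ) := Int.emod_nonneg m hk'
    have hlt := Int.emod_lt_of_pos m (b := (k : ℤ)) (by exact_mod_cast hk)
    have key := Int.mul_ediv_add_emod m (k : ℤ)
    set q := m / (k : ℤ) with hq
    set j := (m % (k : ℤ)).toNat with hjdef
    have hjk : j < k := by omega
    have hm : m = (k : ℤ) * q + j := by omega
    by_cases hcase : j + 1 < k
    · have e1 : m + 1 = (k : ℤ) * q + ((j + 1 : ℕ) : ℤ) := by push_cast; omega
      calc f ((fun m => f^[((m % (k : ℤ))).toNat] (x (m / (k : ℤ)))) m)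
          = f (f^[j] (x q)) := by rw [hm, heval q j hjk]
        _ = f^[j+1] (x q) := (Function.iterate_succ_apply' f j (x q)).symm
        _ = _ := by rw [e1, heval q (j+1) hcase]
    · have hjk1 : j + 1 = k := by omega
      have e1 : m + 1 = (k : ℤ) * (q + 1) + ((0 : ℕ) : ℤ) := by
        have hc : ((j : ℤ)) + 1 = k := by exact_mod_cast hjk1
        rw [hm, Nat.cast_zero, add_zero, mul_add, mul_one]
        linarith
      calc f ((fun m => f^[((m % (k : ℤ))).toNat] (x (m / (k : ℤ)))) m)
          = f (f^[j] (x q)) := by rw [hm, heval q j hjk]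
        _ = f^[j+1] (x q) := (Function.iterate_succ_apply' f j (x q)).symm
        _ = f^[k] (x q) := by rw [hjk1]
        _ = x (q + 1) := hx q
        _ = f^[0] (x (q+1)) := rfl
        _ = _ := by rw [e1, heval (q+1) 0 hk]
  · intro q j hj
    have h1 : ((k : ℤ) * q + j) / k = q := by
      rw [add_comm, Int.add_mul_ediv_left _ _ hk',
        Int.ediv_eq_zero_of_lt (by positivity) (by exact_mod_cast hj), zero_add]
    have h2 : ((k : ℤ) * q + j) % k = j := by
      rw [add_comm, Int.add_mul_emod_self_left,
        Int.emod_eq_of_lt (by positivity) (by exact_mod_cast hj)]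
    simp only [h1, h2, Int.toNat_natCast]

lemma my_combine {k : ℕ} (hk : 0 < k) {g : ℕ → ℝ}
    (h : ∀ r < k, Tendsto (fun n => g (k * n + r)) atTop (𝓝 0)) :
    Tendsto g atTop (𝓝 0) := by
  rw [Metric.tendsto_atTop]
  intro ε hε
  have hN : ∀ r : Fin k, ∃ N, ∀ n ≥ N, dist (g (k * n + r)) 0 < ε := fun r =>
    Metric.tendsto_atTop.mp (h r r.2) ε hε
  choose N hNs using hN
  have : Nonempty (Fin k) := ⟨⟨0, hk⟩⟩
  set M := Finset.univ.sup N with hM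
  refine ⟨k * (M + 1), fun n hn => ?_⟩
  have hdm := Nat.div_add_mod n k
  have hrk : n % k < k := Nat.mod_lt _ hk
  have hq : M + 1 ≤ n / k := by
    rw [Nat.le_div_iff_mul_le hk, Nat.mul_comm]; exact hn
  have hNM : N ⟨n % k, hrk⟩ ≤ M := Finset.le_sup (Finset.mem_univ _)
  have h2 := hNs ⟨n % k, hrk⟩ (n / k) (by omega)
  simpa [Nat.div_add_mod] using h2

lemma my_subseq {k : ℕ} (hk : 0 < k) {g : ℕ → ℝ} (h : Tendsto g atTop (𝓝 0)) :
    Tendsto (fun n => g (k * n)) atTop (𝓝 0) :=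
  h.comp (Filter.tendsto_atTop_atTop.mpr fun b =>
    ⟨b, fun a ha => le_trans ha (Nat.le_mul_of_pos_left a hk)⟩)

lemma my_to_iterate {X : Type*} [MetricSpace X] [CompactSpace X] {f : X → X}
    (hf : Continuous f) (h : BiAsympCExpansive f) {k : ℕ} (hk : 0 < k) :
    BiAsympCExpansive f^[k] := by
  obtain ⟨c, hc, h1, h2⟩ := h
  obtain ⟨δ, hδ, hδc, Hδ⟩ := my_unif f hf hc k
  have hk' : (k : ℤ) ≠ 0 := by exact_mod_cast hk.ne'
  refine ⟨δ, hδ, ?_, ?_⟩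
  · intro x y hx hy hd
    obtain ⟨z, hz, hzval⟩ := my_interp hk hx
    obtain ⟨w, hw, hwval⟩ := my_interp hk hy
    have key : ∀ m : ℤ, (0 ≤ m → dist (z m) (w m) ≤ c) := by
      intro m hm
      have hj0 : 0 ≤ m % (k : ℤ) := Int.emod_nonneg m hk'
      have hlt := Int.emod_lt_of_pos m (b := (k : ℤ)) (by exact_mod_cast hk)
      have key := Int.mul_ediv_add_emod m (k : ℤ)
      set q := m / (k : ℤ) with hq
      set j := (m % (k : ℤ)).toNat with hjdef
      have hjk : j < k := by omega
      have hmm : m = (k : ℤ) * q + j := by omega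
      have hq0 : 0 ≤ q := by
        rcases le_or_gt 0 q with h | h
        · exact h
        · exfalso
          have : (k : ℤ) * q ≤ (k : ℤ) * (-1) := by
            apply mul_le_mul_of_nonneg_left (by omega) (by positivity)
          omega
      have hqx : q = ((q.toNat : ℕ) : ℤ) := by omega
      have hdq : dist (x q) (y q) ≤ δ := by rw [hqx]; exact hd q.toNat
      rw [hmm, hzval q j hjk, hwval q j hjk]
      exact Hδ _ _ hdq j hjk
    have T : Tendsto (fun n : ℕ => dist (z n) (w n)) atTop (𝓝 0) :=
      h1 z w hz hw (fun n => key n (by positivity))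
    have T2 := my_subseq hk T
    have heq : (fun n : ℕ => dist (x (n : ℤ)) (y (n : ℤ)))
        = fun n : ℕ => dist (z (((k * n : ℕ) : ℕ) : ℤ)) (w (((k * n : ℕ) : ℕ) : ℤ)) := by
      funext n
      have e : (((k * n : ℕ) : ℕ) : ℤ) = (k : ℤ) * (n : ℤ) + ((0 : ℕ) : ℤ) := by
        push_cast; ring
      rw [e, hzval _ 0 hk, hwval _ 0 hk]
      simp
    rw [heq]
    exact T2
  · intro x y hx hy hd
    obtain ⟨z, hz, hzval⟩ := my_interp hk hx
    obtain ⟨w, hw, hwval⟩ := my_interp hk hy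
    have key : ∀ m : ℤ, (m ≤ 0 → dist (z m) (w m) ≤ c) := by
      intro m hm
      have hj0 : 0 ≤ m % (k : ℤ) := Int.emod_nonneg m hk'
      have hlt := Int.emod_lt_of_pos m (b := (k : ℤ)) (by exact_mod_cast hk)
      have key := Int.mul_ediv_add_emod m (k : ℤ)
      set q := m / (k : ℤ) with hq
      set j := (m % (k : ℤ)).toNat with hjdef
      have hjk : j < k := by omega
      have hmm : m = (k : ℤ) * q + j := by omega
      have hq0 : q ≤ 0 := by
        rcases le_or_gt q 0 with h | h
        · exact h
        · exfalso
          have : (k : ℤ) * 1 ≤ (k : ℤ) * q := by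
            apply mul_le_mul_of_nonneg_left (by omega) (by positivity)
          omega
      have hqx : q = -(((-q).toNat : ℕ) : ℤ) := by omega
      have hdq : dist (x q) (y q) ≤ δ := by rw [hqx]; exact hd (-q).toNat
      rw [hmm, hzval q j hjk, hwval q j hjk]
      exact Hδ _ _ hdq j hjk
    have T : Tendsto (fun n : ℕ => dist (z (-(n : ℤ))) (w (-(n : ℤ)))) atTop (𝓝 0) :=
      h2 z w hz hw (fun n => key _ (by omega))
    have T2 := my_subseq hk T
    have heq : (fun n : ℕ => dist (x (-(n : ℤ))) (y (-(n : ℤ))))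
        = fun n : ℕ => dist (z (-(((k * n : ℕ) : ℕ) : ℤ))) (w (-(((k * n : ℕ) : ℕ) : ℤ))) := by
      funext n
      have e : -(((k * n : ℕ) : ℕ) : ℤ) = (k : ℤ) * (-(n : ℤ)) + ((0 : ℕ) : ℤ) := by
        push_cast; ring
      rw [e, hzval _ 0 hk, hwval _ 0 hk]
      simp
    rw [heq]
    exact T2
lemma my_from_iterate {X : Type*} [MetricSpace X] {f : X → X} {k : ℕ} (hk : 0 < k)
    (h : BiAsympCExpansive f^[k]) : BiAsympCExpansive f := by
  obtain ⟨c, hc, h1, h2⟩ := h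
  refine ⟨c, hc, ?_, ?_⟩
  · intro x y hx hy hd
    apply my_combine hk (g := fun n : ℕ => dist (x (n : ℤ)) (y (n : ℤ)))
    intro r hr
    have hxr : FullOrbit f^[k] (fun n : ℤ => x ((k : ℤ) * n + r)) := by
      intro n
      rw [my_orbit_iterate hx k ((k : ℤ) * n + r)]
      congr 1; ring
    have hyr : FullOrbit f^[k] (fun n : ℤ => y ((k : ℤ) * n + r)) := by
      intro n
      rw [my_orbit_iterate hy k ((k : ℤ) * n + r)]
      congr 1; ring
    have hdr : ∀ n : ℕ, dist (x ((k : ℤ) * n + r)) (y ((k : ℤ) * n + r)) ≤ c := by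
      intro n
      have e : (k : ℤ) * n + r = ((k * n + r : ℕ) : ℤ) := by push_cast; ring
      rw [e]; exact hd (k * n + r)
    have T := h1 _ _ hxr hyr hdr
    have heq : (fun n : ℕ => dist (x (((k * n + r : ℕ) : ℕ) : ℤ)) (y (((k * n + r : ℕ) : ℕ) : ℤ)))
        = fun n : ℕ => dist (x ((k : ℤ) * n + r)) (y ((k : ℤ) * n + r)) := by
      funext n
      have e : (((k * n + r : ℕ) : ℕ) : ℤ) = (k : ℤ) * n + r := by push_cast; ring
      rw [e]
    exact heq ▸ T
  · intro x y hx hy hd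
    apply my_combine hk (g := fun n : ℕ => dist (x (-(n : ℤ))) (y (-(n : ℤ))))
    intro r hr
    have hxr : FullOrbit f^[k] (fun n : ℤ => x ((k : ℤ) * n - r)) := by
      intro n
      rw [my_orbit_iterate hx k ((k : ℤ) * n - r)]
      congr 1; ring
    have hyr : FullOrbit f^[k] (fun n : ℤ => y ((k : ℤ) * n - r)) := by
      intro n
      rw [my_orbit_iterate hy k ((k : ℤ) * n - r)]
      congr 1; ring
    have hdr : ∀ n : ℕ, dist (x ((k : ℤ) * (-(n : ℤ)) - r)) (y ((k : ℤ) * (-(n : ℤ)) - r)) ≤ c := by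
      intro n
      have e : (k : ℤ) * (-(n : ℤ)) - r = -((k * n + r : ℕ) : ℤ) := by push_cast; ring
      rw [e]; exact hd (k * n + r)
    have T := h2 _ _ hxr hyr hdr
    have heq : (fun n : ℕ => dist (x (-((k * n + r : ℕ) : ℤ))) (y (-((k * n + r : ℕ) : ℤ))))
        = fun n : ℕ => dist (x ((k : ℤ) * (-(n : ℤ)) - r)) (y ((k : ℤ) * (-(n : ℤ)) - r)) := by
      funext n
      have e : -((k * n + r : ℕ) : ℤ) = (k : ℤ) * (-(n : ℤ)) - r := by push_cast; ring
      rw [e]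
    exact heq ▸ T


theorem biAsympCExpansive_iterate_iff {X : Type*} [MetricSpace X] [CompactSpace X]
    (f : X → X) (hf : Continuous f) (hsurj : Function.Surjective f) :
    (BiAsympCExpansive f ↔ ∃ k : ℕ, 0 < k ∧ BiAsympCExpansive f^[k]) ∧
    (BiAsympCExpansive f ↔ ∀ k : ℕ, 0 < k → BiAsympCExpansive f^[k]) := by
  constructor
  · constructor
    · intro h
      exact ⟨1, one_pos, my_to_iterate hf h one_pos⟩
    · rintro ⟨k, hk, h⟩
      exact my_from_iterate hk h
  · constructor
    · intro h k hk
      exact my_to_iterate hf h hk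
    · intro h
      exact my_from_iterate one_pos (h 1 one_pos)
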